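/- Let k ≥ 1 be an integer and let L > 1 and L_0 ≥ 0 be real numbers. Let W = (W_1,...,W_k) and W' = (W'_1,...,W'_k) be independent, with all 2k coordinates i.i.d. Geometric(1/L) on {1, 2, ...} (i.e. P(W_i = w) = L^{−1}(1 − L^{−1})^{w−1} for w ∈ {1,2,...}). Then P( W = W' and Σ_{i=1}^k W_i ≥ k·(L_0 + 1) ) ≤ L^{−k}·(1 − L^{−1})^{k·L_0}. -/

import Mathlib

/-- The probability that an i.i.d. vector of `Geometric(1/L)` variables on `{1,2,...}`
equals `w`: `∏ i, L⁻¹(1−L⁻¹)^{wᵢ−1}` if all `wᵢ ≥ 1`, and `0` otherwise. -/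
noncomputable def geomP (L : ℝ) {k : ℕ} (w : Fin k → ℕ) : ℝ :=
  ∏ i, (if 1 ≤ w i then L⁻¹ * (1 - L⁻¹) ^ (w i - 1) else 0)

lemma geom_term_hasSum {L : ℝ} (hL : 1 < L) :
    HasSum (fun n : ℕ => if 1 ≤ n then L⁻¹ * (1 - L⁻¹) ^ (n - 1) else 0) 1 := by
  have hL0 : (0:ℝ) < L := lt_trans one_pos hL
  have hinv : 0 < L⁻¹ := inv_pos.mpr hL0
  have hinv1 : L⁻¹ < 1 := inv_lt_one_of_one_lt₀ hL
  have hr : |1 - L⁻¹| < 1 := by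
    rw [abs_of_nonneg (by linarith)]; linarith
  have h1 := (hasSum_geometric_of_abs_lt_one hr).mul_left L⁻¹
  have heq : L⁻¹ * (1 - (1 - L⁻¹))⁻¹ = 1 := by
    have : L⁻¹ ≠ 0 := ne_of_gt hinv
    field_simp
    ring
  rw [heq] at h1
  set f : ℕ → ℝ := fun n => if 1 ≤ n then L⁻¹ * (1 - L⁻¹) ^ (n - 1) else 0 with hf
  have h2 : HasSum (fun n : ℕ => f (n + 1)) 1 := by
    have : (fun n : ℕ => f (n + 1)) = fun n : ℕ => L⁻¹ * (1 - L⁻¹) ^ n := by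
      funext n; simp [hf]
    rw [this]; exact h1
  have h3 := (hasSum_nat_add_iff 1).mp h2
  simpa [hf] using h3

lemma geomP_nonneg {L : ℝ} (hL : 1 < L) {k : ℕ} (w : Fin k → ℕ) : 0 ≤ geomP L w := by
  have hinv : 0 ≤ L⁻¹ := inv_nonneg.mpr (le_of_lt (lt_trans one_pos hL))
  have hr : (0:ℝ) ≤ 1 - L⁻¹ := by
    have : L⁻¹ < 1 := inv_lt_one_of_one_lt₀ hL
    linarith
  refine Finset.prod_nonneg fun i _ => ?_
  split
  · exact mul_nonneg hinv (pow_nonneg hr _)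
  · exact le_rfl

lemma geomP_hasSum {L : ℝ} (hL : 1 < L) (k : ℕ) :
    HasSum (geomP L (k := k)) 1 := by
  induction k with
  | zero =>
      have : (geomP L (k := 0)) = fun _ : Fin 0 → ℕ => 1 := by
        funext w; simp [geomP]
      rw [this]
      have := hasSum_single (f := fun _ : Fin 0 → ℕ => (1:ℝ)) (default : Fin 0 → ℕ)
        (fun b hb => absurd (Subsingleton.elim b default) hb)
      simpa using this
  | succ k ih =>
      set g : ℕ → ℝ := fun n => if 1 ≤ n then L⁻¹ * (1 - L⁻¹) ^ (n - 1) else 0 with hg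
      have hgsum : HasSum g 1 := geom_term_hasSum hL
      have hgnn : 0 ≤ g := fun n => by
        have hinv : 0 ≤ L⁻¹ := inv_nonneg.mpr (le_of_lt (lt_trans one_pos hL))
        have hr : (0:ℝ) ≤ 1 - L⁻¹ := by
          have : L⁻¹ < 1 := inv_lt_one_of_one_lt₀ hL
          linarith
        simp only [hg]
        split
        · exact mul_nonneg hinv (pow_nonneg hr _)
        · exact le_rfl
      have hPnn : 0 ≤ geomP L (k := k) := fun w => geomP_nonneg hL w
      have hsummable : Summable fun p : ℕ × (Fin k → ℕ) => g p.1 * geomP L p.2 :=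
        hgsum.summable.mul_of_nonneg ih.summable hgnn hPnn
      have hprod : HasSum (fun p : ℕ × (Fin k → ℕ) => g p.1 * geomP L p.2) 1 := by
        have := hgsum.mul ih hsummable
        simpa using this
      have hcomp : (geomP L (k := k + 1)) ∘ (Fin.consEquiv (fun _ : Fin (k + 1) => ℕ))
          = fun p : ℕ × (Fin k → ℕ) => g p.1 * geomP L p.2 := by
        funext p
        simp only [Function.comp_apply, Fin.consEquiv_apply, geomP]
        rw [Fin.prod_univ_succ]
        simp [hg]
      have h4 := ((Fin.consEquiv (fun _ : Fin (k + 1) => ℕ)).hasSum_iff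
        (f := geomP L (k := k + 1)) (a := 1))
      rw [hcomp] at h4
      exact h4.mp hprod

theorem statement14 :
    ∀ (k : ℕ), 1 ≤ k → ∀ L L₀ : ℝ, 1 < L → 0 ≤ L₀ →
      (∑' p : (Fin k → ℕ) × (Fin k → ℕ),
        Set.indicator {p : (Fin k → ℕ) × (Fin k → ℕ) |
            p.1 = p.2 ∧ (k : ℝ) * (L₀ + 1) ≤ ∑ i, (p.1 i : ℝ)}
          (fun p => geomP L p.1 * geomP L p.2) p) ≤
      L ^ (-(k : ℝ)) * (1 - L⁻¹) ^ ((k : ℝ) * L₀) := by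
  intro k hk L L₀ hL hL₀
  have hL0 : (0:ℝ) < L := lt_trans one_pos hL
  have hinv : 0 < L⁻¹ := inv_pos.mpr hL0
  have hinv1 : L⁻¹ < 1 := inv_lt_one_of_one_lt₀ hL
  have hr0 : (0:ℝ) < 1 - L⁻¹ := by linarith
  set C : ℝ := L ^ (-(k : ℝ)) * (1 - L⁻¹) ^ ((k : ℝ) * L₀) with hC
  have hC0 : 0 ≤ C :=
    mul_nonneg (Real.rpow_nonneg hL0.le _) (Real.rpow_nonneg hr0.le _)
  -- key pointwise bound
  have hkey : ∀ w : Fin k → ℕ, (k : ℝ) * (L₀ + 1) ≤ ∑ i, (w i : ℝ) → geomP L w ≤ C := by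
    intro w hw
    by_cases hall : ∀ i, 1 ≤ w i
    · have hEq : geomP L w = L⁻¹ ^ k * (1 - L⁻¹) ^ (∑ i, (w i - 1)) := by
        unfold geomP
        rw [Finset.prod_congr rfl (fun i _ => if_pos (hall i)),
          Finset.prod_mul_distrib, Finset.prod_const, Finset.prod_pow_eq_pow_sum]
        simp
      rw [hEq]
      have hNcast : ((∑ i, (w i - 1) : ℕ) : ℝ) = (∑ i, (w i : ℝ)) - k := by
        rw [Nat.cast_sum]
        rw [Finset.sum_congr rfl (fun i _ => by
          rw [Nat.cast_sub (hall i), Nat.cast_one])]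
        rw [Finset.sum_sub_distrib]
        simp
      have hexp : (k : ℝ) * L₀ ≤ ((∑ i, (w i - 1) : ℕ) : ℝ) := by
        rw [hNcast]; nlinarith
      have h1 : L⁻¹ ^ k = L ^ (-(k : ℝ)) := by
        rw [Real.rpow_neg hL0.le, Real.rpow_natCast, inv_pow]
      have h2 : (1 - L⁻¹) ^ (∑ i, (w i - 1)) ≤ (1 - L⁻¹) ^ ((k : ℝ) * L₀) := by
        rw [← Real.rpow_natCast (1 - L⁻¹) (∑ i, (w i - 1))]
        exact Real.rpow_le_rpow_of_exponent_ge hr0 (by linarith) hexp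
      calc L⁻¹ ^ k * (1 - L⁻¹) ^ (∑ i, (w i - 1))
          ≤ L⁻¹ ^ k * (1 - L⁻¹) ^ ((k : ℝ) * L₀) :=
            mul_le_mul_of_nonneg_left h2 (pow_nonneg hinv.le _)
        _ = C := by rw [hC, h1]
    · push_neg at hall
      obtain ⟨i, hi⟩ := hall
      have : geomP L w = 0 := by
        unfold geomP
        exact Finset.prod_eq_zero (Finset.mem_univ i) (if_neg (by omega))
      rw [this]; exact hC0
  -- diagonal auxiliary function
  set g : (Fin k → ℕ) × (Fin k → ℕ) → ℝ :=
    fun p => if p.1 = p.2 then C * geomP L p.1 else 0 with hgdef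
  have hd : Function.Injective (fun w : Fin k → ℕ => (w, w)) := by
    intro a b hab
    exact congrArg Prod.fst hab
  have hsupp : ∀ p ∉ Set.range (fun w : Fin k → ℕ => (w, w)), g p = 0 := by
    intro p hp
    simp only [hgdef]
    rw [if_neg]
    intro h
    exact hp ⟨p.1, by rw [Prod.ext_iff]; exact ⟨rfl, h⟩⟩
  have hgcomp : HasSum (g ∘ fun w : Fin k → ℕ => (w, w)) C := by
    have : (g ∘ fun w : Fin k → ℕ => (w, w)) = fun w => C * geomP L w := by
      funext w; simp [hgdef]
    rw [this]
    simpa using (geomP_hasSum hL k).mul_left C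
  have hg : HasSum g C := (hd.hasSum_iff hsupp).mp hgcomp
  -- pointwise bound of indicator by g
  have hpt : ∀ p : (Fin k → ℕ) × (Fin k → ℕ),
      Set.indicator {p : (Fin k → ℕ) × (Fin k → ℕ) |
          p.1 = p.2 ∧ (k : ℝ) * (L₀ + 1) ≤ ∑ i, (p.1 i : ℝ)}
        (fun p => geomP L p.1 * geomP L p.2) p ≤ g p := by
    intro p
    by_cases hmem : p ∈ {p : (Fin k → ℕ) × (Fin k → ℕ) |
        p.1 = p.2 ∧ (k : ℝ) * (L₀ + 1) ≤ ∑ i, (p.1 i : ℝ)}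
    · rw [Set.indicator_of_mem hmem]
      obtain ⟨heq, hge⟩ := hmem
      simp only [hgdef, if_pos heq]
      rw [← heq]
      exact mul_le_mul_of_nonneg_right (hkey p.1 hge) (geomP_nonneg hL p.1)
    · rw [Set.indicator_of_notMem hmem]
      simp only [hgdef]
      split
      · exact mul_nonneg hC0 (geomP_nonneg hL _)
      · exact le_rfl
  have hindnn : ∀ p : (Fin k → ℕ) × (Fin k → ℕ),
      0 ≤ Set.indicator {p : (Fin k → ℕ) × (Fin k → ℕ) |
          p.1 = p.2 ∧ (k : ℝ) * (L₀ + 1) ≤ ∑ i, (p.1 i : ℝ)}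
        (fun p => geomP L p.1 * geomP L p.2) p := by
    intro p
    apply Set.indicator_nonneg
    intro q _
    exact mul_nonneg (geomP_nonneg hL _) (geomP_nonneg hL _)
  have hsum_ind : Summable (Set.indicator {p : (Fin k → ℕ) × (Fin k → ℕ) |
      p.1 = p.2 ∧ (k : ℝ) * (L₀ + 1) ≤ ∑ i, (p.1 i : ℝ)}
    (fun p => geomP L p.1 * geomP L p.2)) :=
    Summable.of_nonneg_of_le hindnn hpt hg.summable
  calc (∑' p : (Fin k → ℕ) × (Fin k → ℕ),
        Set.indicator {p : (Fin k → ℕ) × (Fin k → ℕ) |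
            p.1 = p.2 ∧ (k : ℝ) * (L₀ + 1) ≤ ∑ i, (p.1 i : ℝ)}
          (fun p => geomP L p.1 * geomP L p.2) p)
      ≤ ∑' p, g p := Summable.tsum_le_tsum hpt hsum_ind hg.summable
    _ = C := hg.tsum_eq
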